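/- Under the Independence axioms for ≿ and c, the sets B(p) and W(p) satisfy a translation property: for lotteries p, p', q, q' ∈ Δ(Z) with q − p = q' − p' (as vectors in ℝ^Z), q ∈ B(p) implies q' ∈ B(p'), and q ∈ W(p) implies q' ∈ W(p'). -/

import Mathlib

open Finset
open scoped Classical

/-- `B(p)`: lotteries weakly worse than `p` that nevertheless defeat `p`
in pairwise choice. -/
def Bset {Z : Type*} (pref : (Z → ℝ) → (Z → ℝ) → Prop)
    (c : Finset (Z → ℝ) → Finset (Z → ℝ)) (p q : Z → ℝ) : Prop :=
  pref p q ∧ c {p, q} = {q}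

/-- `W(p)`: lotteries weakly better than `p` that nevertheless lose to `p`
in pairwise choice. -/
def Wset {Z : Type*} (pref : (Z → ℝ) → (Z → ℝ) → Prop)
    (c : Finset (Z → ℝ) → Finset (Z → ℝ)) (p q : Z → ℝ) : Prop :=
  pref q p ∧ q ∉ c {p, q}

/-- Independence axiom for the true preference. -/
def PrefIndep {Z : Type*} (pref : (Z → ℝ) → (Z → ℝ) → Prop) : Prop :=
  ∀ (p q r : Z → ℝ), ∀ a : ℝ, a ∈ Set.Ioo (0:ℝ) 1 →
    pref p q → pref (a • p + (1 - a) • r) (a • q + (1 - a) • r)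

/-- Independence axiom for choice. -/
def ChoiceIndep {Z : Type*} (c : Finset (Z → ℝ) → Finset (Z → ℝ)) : Prop :=
  ∀ (A : Finset (Z → ℝ)) (p : Z → ℝ), ∀ a : ℝ, a ∈ Set.Ioo (0:ℝ) 1 →
    c (A.image fun q => a • q + (1 - a) • p) =
      (c A).image fun q => a • q + (1 - a) • p

/-- Irrelevance of Unjustifiable Alternatives on the lottery domain. -/
def IUAL {Z : Type*} (pref : (Z → ℝ) → (Z → ℝ) → Prop)
    (c : Finset (Z → ℝ) → Finset (Z → ℝ)) : Prop :=
  ∀ (A : Finset (Z → ℝ)) (q : Z → ℝ), q ∈ A → (∀ b ∈ c A, pref q b) → q ∉ c A →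
    ∀ B : Finset (Z → ℝ), A ⊆ B → c (B.erase q) = c B

theorem pref_congr_aux {Z : Type*} (pref : (Z → ℝ) → (Z → ℝ) → Prop)
    {a b a' b' : Z → ℝ} (h1 : a = a') (h2 : b = b') (h : pref a b) : pref a' b' := by
  subst h1; subst h2; exact h

theorem pref_shift_aux {Z : Type*} (pref : (Z → ℝ) → (Z → ℝ) → Prop)
    (htrans : Transitive pref) (hPI : PrefIndep pref)
    (p q t : Z → ℝ) (h : pref p q) : pref (p + t) (q + t) := by
  have hh : (1/2 : ℝ) ∈ Set.Ioo (0:ℝ) 1 := by norm_num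
  have h1 := hPI p q (p + t) (1/2) hh h
  have h2 := hPI p q (q + t) (1/2) hh h
  have h5 : pref ((1/2:ℝ) • p + (1 - 1/2:ℝ) • (p + t))
      ((1/2:ℝ) • q + (1 - 1/2:ℝ) • (q + t)) :=
    htrans (pref_congr_aux pref rfl (by module) h1) h2
  have h6 := hPI _ _ (p + (3/2:ℝ) • t) (1/2) hh h5
  have h7 := hPI _ _ (q + (3/2:ℝ) • t) (1/2) hh h5
  have h7' : pref ((1/2:ℝ) • ((1/2:ℝ) • q + (1 - 1/2:ℝ) • (q + t)) +
      (1 - 1/2:ℝ) • (p + (3/2:ℝ) • t)) (q + t) :=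
    pref_congr_aux pref (by module) (by module) h7
  exact pref_congr_aux pref (by module) rfl (htrans h6 h7')

/-- Lemma 5: `B(p)` and `W(p)` are translation invariant. -/
theorem Bset_Wset_translation {Z : Type*} [Fintype Z]
    (pref : (Z → ℝ) → (Z → ℝ) → Prop) (c : Finset (Z → ℝ) → Finset (Z → ℝ))
    (hcomp : ∀ p q : Z → ℝ, pref p q ∨ pref q p) (htrans : Transitive pref)
    (hsub : ∀ A, c A ⊆ A) (hnem : ∀ A : Finset (Z → ℝ), A.Nonempty → (c A).Nonempty)
    (hPI : PrefIndep pref) (hCI : ChoiceIndep c)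
    (p p' q q' : Z → ℝ)
    (hp : p ∈ stdSimplex ℝ Z) (hp' : p' ∈ stdSimplex ℝ Z)
    (hq : q ∈ stdSimplex ℝ Z) (hq' : q' ∈ stdSimplex ℝ Z)
    (hshift : q - p = q' - p') :
    (Bset pref c p q → Bset pref c p' q') ∧
    (Wset pref c p q → Wset pref c p' q') := by
  have ht : p' - p = q' - q := by
    rw [sub_eq_sub_iff_add_eq_add] at hshift ⊢
    rw [add_comm p' q, ← hshift, add_comm]
  have hp'eq : p' = p + (p' - p) := by abel
  have hq'eq : q' = q + (p' - p) := by rw [ht]; abel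
  have hh : (1/2 : ℝ) ∈ Set.Ioo (0:ℝ) 1 := by norm_num
  -- the two mixing maps
  set f : (Z → ℝ) → (Z → ℝ) := fun x => (1/2:ℝ) • x + (1 - 1/2:ℝ) • p with hf
  set g : (Z → ℝ) → (Z → ℝ) := fun x => (1/2:ℝ) • x + (1 - 1/2:ℝ) • p' with hg
  have hfinj : Function.Injective f := by
    intro a b hab
    have : (1/2:ℝ) • a = (1/2:ℝ) • b := by
      have := hab
      simp only [hf] at this
      exact add_right_cancel this
    exact smul_right_injective (Z → ℝ) (by norm_num : (1/2:ℝ) ≠ 0) this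
  have hginj : Function.Injective g := by
    intro a b hab
    have : (1/2:ℝ) • a = (1/2:ℝ) • b := by
      have := hab
      simp only [hg] at this
      exact add_right_cancel this
    exact smul_right_injective (Z → ℝ) (by norm_num : (1/2:ℝ) ≠ 0) this
  have hfp' : f p' = g p := by simp only [hf, hg]; module
  have hfq' : f q' = g q := by
    simp only [hf, hg]
    rw [hq'eq, hp'eq]; module
  have hdom : ({p', q'} : Finset (Z → ℝ)).image f = ({p, q} : Finset (Z → ℝ)).image g := by
    simp only [Finset.image_insert, Finset.image_singleton, hfp', hfq']
  have instEq : (fun (a b : Z → ℝ) => Classical.propDecidable (a = b)) =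
      (inferInstance : DecidableEq (Z → ℝ)) :=
    Subsingleton.elim _ _
  have hA := hCI {p, q} p' (1/2) hh
  have hB := hCI {p', q'} p (1/2) hh
  rw [instEq] at hA hB
  rw [← hg] at hA
  rw [← hf] at hB
  rw [hdom, hA] at hB
  -- hB : (c {p,q}).image g = (c {p',q'}).image f
  constructor
  · rintro ⟨h1, h2⟩
    rw [instEq] at h2
    refine ⟨?_, ?_⟩
    · have := pref_shift_aux pref htrans hPI p q (p' - p) h1
      exact pref_congr_aux pref hp'eq.symm hq'eq.symm this
    · rw [instEq]
      rw [h2] at hB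
      apply Finset.image_injective hfinj
      rw [← hB]
      simp only [Finset.image_singleton, hfq']
  · rintro ⟨h1, h2⟩
    rw [instEq] at h2
    refine ⟨?_, ?_⟩
    · have := pref_shift_aux pref htrans hPI q p (p' - p) h1
      exact pref_congr_aux pref hq'eq.symm hp'eq.symm this
    · rw [instEq]
      intro hmem
      have : f q' ∈ (c {p', q'}).image f := Finset.mem_image_of_mem f hmem
      rw [← hB, hfq'] at this
      obtain ⟨b, hb, hbe⟩ := Finset.mem_image.mp this
      exact h2 (hginj hbe ▸ hb)
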